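/- In the standard IV model (latent variable version), marginalizing the identity δ_0⋆(η_1⋆ − η_0⋆) + δ_1⋆(−η_1⋆ − η_0⋆ + 1) + η_0⋆ ≥ 0 over P(U), using the identities ζ_{1x.w}⋆ = η_{x}⋆ (δ_w⋆)^{[x=1]}(1−δ_w⋆)^{[x=0]} with η_{xw}⋆ = η_x⋆ (no direct W→Y effect), yields the observable constraint η_0 ≤ ζ_{11.0} + ζ_{10.0} + ζ_{10.1} + ζ_{01.1}, where η_0 = E[η_0⋆] and ζ_{yx.w} are the corresponding marginalized probabilities. -/
import Mathlib


open MeasureTheory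

private lemma integ_aux {U : Type*} [MeasurableSpace U] (P : Measure U) [IsProbabilityMeasure P]
    (f : U → ℝ) (hm : Measurable f) (hb : ∀ u, |f u| ≤ 1) : Integrable f P := by
  exact (integrable_const (1:ℝ)).mono' hm.aestronglyMeasurable (Filter.Eventually.of_forall hb)

/-- Marginalizing the identity `δ₀⋆(η₁⋆ - η₀⋆) + δ₁⋆(-η₁⋆ - η₀⋆ + 1) + η₀⋆ ≥ 0`
over `P(U)` in the standard IV model, with `ζ_{11.0} = E[η₁⋆δ₀⋆]`,
`ζ_{10.0} = E[η₀⋆(1-δ₀⋆)]`, `ζ_{10.1} = E[η₀⋆(1-δ₁⋆)]`, `ζ_{01.1} = E[(1-η₁⋆)δ₁⋆]`,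
yields `η₀ = E[η₀⋆] ≤ ζ_{11.0} + ζ_{10.0} + ζ_{10.1} + ζ_{01.1}`. -/
theorem stmt13 {U : Type*} [MeasurableSpace U] (P : Measure U) [IsProbabilityMeasure P]
    (η0 η1 δ0 δ1 : U → ℝ)
    (hm0 : Measurable η0) (hm1 : Measurable η1)
    (hmd0 : Measurable δ0) (hmd1 : Measurable δ1)
    (hη0 : ∀ u, η0 u ∈ Set.Icc (0:ℝ) 1) (hη1 : ∀ u, η1 u ∈ Set.Icc (0:ℝ) 1)
    (hδ0 : ∀ u, δ0 u ∈ Set.Icc (0:ℝ) 1) (hδ1 : ∀ u, δ1 u ∈ Set.Icc (0:ℝ) 1)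
    (hid : ∀ u, 0 ≤ δ0 u * (η1 u - η0 u) + δ1 u * (-η1 u - η0 u + 1) + η0 u) :
    ∫ u, η0 u ∂P ≤ (∫ u, η1 u * δ0 u ∂P) + (∫ u, η0 u * (1 - δ0 u) ∂P)
      + (∫ u, η0 u * (1 - δ1 u) ∂P) + ∫ u, (1 - η1 u) * δ1 u ∂P := by
  have bnd : ∀ (f g : U → ℝ), (∀ u, f u ∈ Set.Icc (0:ℝ) 1) → (∀ u, g u ∈ Set.Icc (0:ℝ) 1) →
      ∀ u, |f u * g u| ≤ 1 := by
    intro f g hf hg u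
    obtain ⟨hf0, hf1⟩ := hf u; obtain ⟨hg0, hg1⟩ := hg u
    rw [abs_of_nonneg (mul_nonneg hf0 hg0)]
    calc f u * g u ≤ 1 * 1 := mul_le_mul hf1 hg1 hg0 zero_le_one
    _ = 1 := one_mul 1
  have hc : ∀ u, (1 - η1 u) ∈ Set.Icc (0:ℝ) 1 := fun u => by
    obtain ⟨h0, h1⟩ := hη1 u; constructor <;> linarith
  have hc0 : ∀ u, (1 - δ0 u) ∈ Set.Icc (0:ℝ) 1 := fun u => by
    obtain ⟨h0, h1⟩ := hδ0 u; constructor <;> linarith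
  have hc1 : ∀ u, (1 - δ1 u) ∈ Set.Icc (0:ℝ) 1 := fun u => by
    obtain ⟨h0, h1⟩ := hδ1 u; constructor <;> linarith
  have i1 : Integrable (fun u => η1 u * δ0 u) P :=
    integ_aux P _ (hm1.mul hmd0) (bnd _ _ hη1 hδ0)
  have i2 : Integrable (fun u => η0 u * (1 - δ0 u)) P :=
    integ_aux P _ (hm0.mul (measurable_const.sub hmd0)) (bnd _ _ hη0 hc0)
  have i3 : Integrable (fun u => η0 u * (1 - δ1 u)) P :=
    integ_aux P _ (hm0.mul (measurable_const.sub hmd1)) (bnd _ _ hη0 hc1)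
  have i4 : Integrable (fun u => (1 - η1 u) * δ1 u) P :=
    integ_aux P _ ((measurable_const.sub hm1).mul hmd1) (bnd _ _ hc hδ1)
  have i0 : Integrable η0 P :=
    integ_aux P _ hm0 (fun u => by
      obtain ⟨h0, h1⟩ := hη0 u; rw [abs_of_nonneg h0]; exact h1)
  have key : ∫ u, η0 u ∂P ≤ ∫ u, (η1 u * δ0 u + η0 u * (1 - δ0 u)
      + η0 u * (1 - δ1 u) + (1 - η1 u) * δ1 u) ∂P := by
    refine integral_mono i0 (((i1.add i2).add i3).add i4) (fun u => ?_)
    have := hid u; nlinarith [this]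
  calc ∫ u, η0 u ∂P ≤ _ := key
  _ = (∫ u, η1 u * δ0 u ∂P) + (∫ u, η0 u * (1 - δ0 u) ∂P)
      + (∫ u, η0 u * (1 - δ1 u) ∂P) + ∫ u, (1 - η1 u) * δ1 u ∂P := by
    have i12 : Integrable (fun u => η1 u * δ0 u + η0 u * (1 - δ0 u)) P := i1.add i2
    have i123 : Integrable (fun u => η1 u * δ0 u + η0 u * (1 - δ0 u)
        + η0 u * (1 - δ1 u)) P := i12.add i3
    symm
    rw [← integral_add i1 i2, ← integral_add i12 i3, ← integral_add i123 i4]
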